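/- Let f be holomorphic near a repelling periodic point η of exact period m (f^m(η)=η, |(f^m)'(η)|>1). Then there exists a sequence {η_n}_{n≥0} with η_0 in any prescribed punctured neighborhood of η avoiding the cycle, such that f(η_{n+1})=η_n for all n, and the set of accumulation points of {η_n} equals the cycle {η, f(η), …, f^{m-1}(η)}. -/

import Mathlib

open Filter Topology

private lemma iterAnalytic (f : ℂ → ℂ) (η : ℂ) (han : ∀ k : ℕ, AnalyticAt ℂ f (f^[k] η)) :
    ∀ n k : ℕ, AnalyticAt ℂ (f^[n]) (f^[k] η) := by
  intro n
  induction n with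
  | zero => intro k; rw [Function.iterate_zero]; exact analyticAt_id
  | succ n ih =>
    intro k
    have h1 : AnalyticAt ℂ f (f^[n] (f^[k] η)) := by
      rw [← Function.iterate_add_apply]; exact han (n + k)
    rw [Function.iterate_succ']
    exact h1.comp (ih k)

private lemma locInv (g : ℂ → ℂ) (η : ℂ) (hg : HasStrictDerivAt g (deriv g η) η)
    (hη : g η = η) (h0 : deriv g η ≠ 0) :
    ∃ h : ℂ → ℂ, h η = η ∧ (∀ᶠ y in 𝓝 η, g (h y) = y) ∧
      HasStrictDerivAt h (deriv g η)⁻¹ η := by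
  refine ⟨hg.localInverse g _ η h0, ?_, ?_, ?_⟩
  · have := (hg.hasStrictFDerivAt_equiv h0).localInverse_apply_image
    rwa [hη] at this
  · have := (hg.hasStrictFDerivAt_equiv h0).eventually_right_inverse
    rwa [hη] at this
  · have := hg.to_localInverse h0
    rwa [hη] at this

/-- Backward orbit accumulating exactly on a repelling cycle: let `f` be holomorphic near the
(repelling, exact period `m`) cycle of `η`. Then for any neighborhood `V` of `η` there is a
sequence `a` with `a 0 ∈ V` avoiding the cycle, `f (a (n+1)) = a n`, and whose set of
accumulation points is exactly the cycle `{η, f η, …, f^[m-1] η}`. -/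
theorem stmt7 (f : ℂ → ℂ) (η : ℂ) (m : ℕ) (hm : 0 < m)
    (han : ∀ k : ℕ, AnalyticAt ℂ f (f^[k] η))
    (hper : f^[m] η = η) (hexact : ∀ k : ℕ, 0 < k → k < m → f^[k] η ≠ η)
    (hrep : 1 < ‖deriv (f^[m]) η‖) :
    ∀ V ∈ 𝓝 η, ∃ a : ℕ → ℂ,
      a 0 ∈ V ∧ (∀ k : ℕ, a 0 ≠ f^[k] η) ∧
      (∀ j : ℕ, f (a (j + 1)) = a j) ∧
      {x : ℂ | MapClusterPt x atTop a} = {x : ℂ | ∃ k : ℕ, k < m ∧ x = f^[k] η} := by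
  have hiter : ∀ n k : ℕ, AnalyticAt ℂ (f^[n]) (f^[k] η) := iterAnalytic f η han
  have hiter0 : ∀ n : ℕ, AnalyticAt ℂ (f^[n]) η := fun n => by
    have := hiter n 0; simpa using this
  have hcont : ∀ n : ℕ, ContinuousAt (f^[n]) η := fun n => (hiter0 n).continuousAt
  have hfixq : ∀ q : ℕ, (f^[m])^[q] η = η := fun q => Function.IsFixedPt.iterate hper q
  have hmod : ∀ k : ℕ, f^[k] η = f^[k % m] η := by
    intro k
    conv_lhs => rw [← Nat.mod_add_div k m]
    rw [Function.iterate_add_apply, Function.iterate_mul, hfixq]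
  intro V hV
  -- strict derivative of the return map
  have hgS : HasStrictDerivAt (f^[m]) (deriv (f^[m]) η) η := by
    have := (hiter0 m).hasStrictFDerivAt.hasStrictDerivAt
    rwa [fderiv_apply_one_eq_deriv] at this
  have hlam0 : deriv (f^[m]) η ≠ 0 := by
    intro h; rw [h, norm_zero] at hrep; linarith
  obtain ⟨h, hηfix, hright, hhS⟩ := locInv (f^[m]) η hgS hper hlam0
  -- contraction constant
  have hnormlt : ‖(deriv (f^[m]) η)⁻¹‖₊ < 1 := by
    rw [← NNReal.coe_lt_coe, coe_nnnorm, norm_inv, NNReal.coe_one]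
    rw [inv_lt_one_iff₀]
    right; exact hrep
  obtain ⟨K, hK1, hK2⟩ := exists_between hnormlt
  have hlipK : ‖ContinuousLinearMap.smulRight (1 : ℂ →L[ℂ] ℂ) (deriv (f^[m]) η)⁻¹‖₊ < K := by
    rw [ContinuousLinearMap.nnnorm_smulRight_apply]
    simpa using hK1
  obtain ⟨s, hs, hlip⟩ := hhS.hasStrictFDerivAt.exists_lipschitzOnWith_of_nnnorm_lt K hlipK
  -- a good ball around η
  have hU : s ∩ {y | f^[m] (h y) = y} ∩ V ∈ 𝓝 η := inter_mem (inter_mem hs hright) hV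
  obtain ⟨r, hr0, hrball⟩ := Metric.mem_nhds_iff.mp hU
  have hball_s : Metric.ball η r ⊆ s := fun x hx => ((hrball hx).1).1
  have hball_inv : ∀ x ∈ Metric.ball η r, f^[m] (h x) = x := fun x hx => ((hrball hx).1).2
  have hball_V : Metric.ball η r ⊆ V := fun x hx => (hrball hx).2
  have hηs : η ∈ s := mem_of_mem_nhds hs
  have hK1R : (K : ℝ) < 1 := hK2
  have hK0 : (0:ℝ) ≤ K := K.coe_nonneg
  have hstep : ∀ x ∈ Metric.ball η r, dist (h x) η ≤ K * dist x η := by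
    intro x hx
    have := hlip.dist_le_mul x (hball_s hx) η hηs
    rwa [hηfix] at this
  -- choose the starting point
  have hTfin : (((fun k => f^[k] η) '' Set.Iio m)).Finite := (Set.finite_Iio m).image _
  obtain ⟨b0, hb0ball, hb0T⟩ :
      ∃ b0, b0 ∈ Metric.ball η r ∧ b0 ∉ ((fun k => f^[k] η) '' Set.Iio m) := by
    have hdense := (hTfin.countable).dense_compl ℂ
    obtain ⟨x, hx1, hx2⟩ := hdense.inter_open_nonempty _ Metric.isOpen_ball
      ⟨η, Metric.mem_ball_self hr0⟩
    exact ⟨x, hx1, hx2⟩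
  -- the backward orbit along the return map
  set b : ℕ → ℂ := fun j => h^[j] b0 with hbdef
  have hbsucc : ∀ j, b (j+1) = h (b j) := fun j => Function.iterate_succ_apply' h j b0
  have hbmem : ∀ j, b j ∈ Metric.ball η r ∧ dist (b j) η ≤ K^j * dist b0 η := by
    intro j
    induction j with
    | zero =>
      refine ⟨hb0ball, ?_⟩
      show dist b0 η ≤ K^0 * dist b0 η
      simp
    | succ j ih =>
      have h1 : dist (b (j+1)) η ≤ K * dist (b j) η := by
        rw [hbsucc]; exact hstep _ ih.1
      constructor
      · rw [Metric.mem_ball]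
        calc dist (b (j+1)) η ≤ K * dist (b j) η := h1
          _ ≤ 1 * dist (b j) η := mul_le_mul_of_nonneg_right hK1R.le dist_nonneg
          _ = dist (b j) η := one_mul _
          _ < r := ih.1
      · calc dist (b (j+1)) η ≤ K * dist (b j) η := h1
          _ ≤ K * (K^j * dist b0 η) := mul_le_mul_of_nonneg_left ih.2 hK0
          _ = K^(j+1) * dist b0 η := by ring
  have hbtend : Tendsto b atTop (𝓝 η) := by
    rw [tendsto_iff_dist_tendsto_zero]
    apply squeeze_zero (fun j => dist_nonneg) (fun j => (hbmem j).2)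
    have := (tendsto_pow_atTop_nhds_zero_of_lt_one hK0 hK1R).mul_const (dist b0 η)
    simpa using this
  have grightb : ∀ j, f^[m] (b (j+1)) = b j := by
    intro j
    rw [hbsucc]
    exact hball_inv _ (hbmem j).1
  -- the sequence
  set Rn : ℕ → ℕ := fun n => (m - n % m) % m with hRdef
  set Jn : ℕ → ℕ := fun n => (n + m - 1) / m with hJdef
  set a : ℕ → ℂ := fun n => f^[Rn n] (b (Jn n)) with hadef
  have hJeval : ∀ q s, s < m → Jn (m*q+s) = if s = 0 then q else q + 1 := by
    intro q s hs
    show (m*q + s + m - 1)/m = _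
    by_cases h0 : s = 0
    · subst h0
      rw [if_pos rfl]
      have e : m*q + 0 + m - 1 = m*q + (m-1) := by omega
      rw [e, Nat.mul_add_div hm, Nat.div_eq_of_lt (by omega)]
      omega
    · rw [if_neg h0]
      have e : m*q + s + m - 1 = m*q + (s - 1 + m) := by omega
      rw [e, Nat.mul_add_div hm, Nat.add_div_right _ hm, Nat.div_eq_of_lt (by omega)]
  have hReval : ∀ q s, s < m → Rn (m*q+s) = (m - s) % m := by
    intro q s hs
    show (m - (m*q + s) % m) % m = _
    rw [Nat.mul_add_mod, Nat.mod_eq_of_lt hs]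
  have haeval : ∀ q s, s < m → a (m*q+s) = f^[(m-s)%m] (b (if s = 0 then q else q+1)) := by
    intro q s hs
    show f^[Rn (m*q+s)] (b (Jn (m*q+s))) = _
    rw [hJeval q s hs, hReval q s hs]
  have ha0 : a 0 = b0 := by
    have := haeval 0 0 hm
    simp [Nat.mod_self] at this
    rw [this]; rfl
  -- the recurrence
  have hrec : ∀ n, f (a (n+1)) = a n := by
    intro n
    obtain ⟨q, s, hsm, rfl⟩ : ∃ q s, s < m ∧ n = m*q + s :=
      ⟨n/m, n%m, Nat.mod_lt _ hm, (Nat.div_add_mod n m).symm⟩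
    by_cases h0 : s = 0
    · subst h0
      have e1 : a (m*q + 0) = b q := by
        have := haeval q 0 hm
        simpa [Nat.mod_self] using this
      by_cases hm1 : m = 1
      · subst hm1
        have e2 : a (1*q + 0 + 1) = b (q+1) := by
          have en : 1*q + 0 + 1 = 1*(q+1) + 0 := by omega
          rw [en]
          have := haeval (q+1) 0 hm
          simpa [Nat.mod_self] using this
        rw [e1, e2]
        have := grightb q
        simpa using this
      · have e2 : a (m*q + 0 + 1) = f^[m-1] (b (q+1)) := by
          have en : m*q + 0 + 1 = m*q + 1 := by omega
          have e' : (m-1) % m = m - 1 := Nat.mod_eq_of_lt (by omega)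
          have := haeval q 1 (by omega)
          rw [if_neg (by omega), e'] at this
          rw [en, this]
        have em : m = m - 1 + 1 := by omega
        have hgq := grightb q
        rw [em, Function.iterate_succ_apply'] at hgq
        rw [e1, e2]
        exact hgq
    · have hs1 : 1 ≤ s := Nat.pos_of_ne_zero h0
      have e1 : a (m*q+s) = f^[m-s] (b (q+1)) := by
        rw [haeval q s hsm, if_neg h0, Nat.mod_eq_of_lt (by omega)]
      by_cases hsm1 : s + 1 = m
      · have e2 : a (m*q+s+1) = b (q+1) := by
          have en : m*q+s+1 = m*(q+1) + 0 := by rw [Nat.mul_succ]; omega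
          rw [en]
          have := haeval (q+1) 0 hm
          simpa [Nat.mod_self] using this
        rw [e1, e2]
        have em : m - s = 1 := by omega
        rw [em, Function.iterate_one]
      · have e2 : a (m*q+(s+1)) = f^[m-(s+1)] (b (q+1)) := by
          rw [haeval q (s+1) (by omega), if_neg (by omega), Nat.mod_eq_of_lt (by omega)]
        have en : m*q+s+1 = m*q+(s+1) := by omega
        have em : m - s = (m - (s+1)) + 1 := by omega
        rw [en, e2, e1, em, Function.iterate_succ_apply']
  -- each cycle point is a cluster point
  have hnear : ∀ k, k < m → ∀ j, a (m*j + (m-k)%m) = f^[k] (b (if k = 0 then j else j+1)) := by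
    intro k hk j
    by_cases hk0 : k = 0
    · subst hk0
      rw [if_pos rfl]
      have e : (m - 0) % m = 0 := by simp [Nat.mod_self]
      rw [e]
      have := haeval j 0 hm
      simpa [Nat.mod_self] using this
    · rw [if_neg hk0]
      have hk1 : 1 ≤ k := Nat.pos_of_ne_zero hk0
      have e : (m - k) % m = m - k := Nat.mod_eq_of_lt (by omega)
      have e2 : m - (m - k) = k := by omega
      rw [e, haeval j (m-k) (by omega), if_neg (by omega), e2, Nat.mod_eq_of_lt hk]
  have hsub : ∀ k, k < m → MapClusterPt (f^[k] η) atTop a := by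
    intro k hk
    have hφ : Tendsto (fun j => m*j + (m-k)%m) atTop atTop := by
      apply tendsto_atTop_atTop.mpr
      intro N
      refine ⟨N, fun j hj => ?_⟩
      have h1 : j ≤ m*j := Nat.le_mul_of_pos_left j hm
      omega
    have hblim : Tendsto (fun j => b (if k = 0 then j else j + 1)) atTop (𝓝 η) := by
      by_cases hk0 : k = 0
      · simpa [hk0] using hbtend
      · simp only [if_neg hk0]
        exact hbtend.comp (tendsto_add_atTop_nat 1)
    have hlim : Tendsto (fun j => f^[k] (b (if k = 0 then j else j+1))) atTop (𝓝 (f^[k] η)) :=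
      (hcont k).tendsto.comp hblim
    refine MapClusterPt.of_comp hφ ?_
    have e : (a ∘ fun j => m*j + (m-k)%m) = fun j => f^[k] (b (if k = 0 then j else j+1)) :=
      funext fun j => hnear k hk j
    rw [e]
    exact hlim.mapClusterPt
  -- the sequence eventually stays near the cycle
  have hJtend : Tendsto Jn atTop atTop := by
    apply tendsto_atTop_atTop.mpr
    intro N
    refine ⟨m*N, fun n hn => ?_⟩
    show N ≤ (n + m - 1)/m
    rw [Nat.le_div_iff_mul_le hm]
    have e : N * m = m * N := Nat.mul_comm N m
    omega
  have hnearT : ∀ ε : ℝ, 0 < ε → ∀ᶠ n in atTop, ∃ k, k < m ∧ dist (a n) (f^[k] η) < ε := by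
    intro ε hε
    have hev : ∀ᶠ y in 𝓝 η, ∀ k ∈ Set.Iio m, dist (f^[k] y) (f^[k] η) < ε := by
      rw [(Set.finite_Iio m).eventually_all]
      intro k _
      have := (hcont k).tendsto (Metric.ball_mem_nhds (f^[k] η) hε)
      exact this
    have hbev : ∀ᶠ j in atTop, ∀ k ∈ Set.Iio m, dist (f^[k] (b j)) (f^[k] η) < ε :=
      hbtend.eventually hev
    filter_upwards [hJtend.eventually hbev] with n hn
    refine ⟨Rn n, Nat.mod_lt _ hm, ?_⟩
    have e : a n = f^[Rn n] (b (Jn n)) := rfl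
    rw [e]
    exact hn (Rn n) (Set.mem_Iio.mpr (Nat.mod_lt _ hm))
  refine ⟨a, ?_, ?_, hrec, ?_⟩
  · rw [ha0]; exact hball_V hb0ball
  · intro k
    rw [ha0, hmod k]
    intro hEq
    exact hb0T ⟨k % m, Set.mem_Iio.mpr (Nat.mod_lt _ hm), hEq.symm⟩
  · ext x
    simp only [Set.mem_setOf_eq]
    constructor
    · intro hx
      by_contra hnot
      push_neg at hnot
      have hTcl : IsClosed ((fun k => f^[k] η) '' Set.Iio m) := hTfin.isClosed
      have hxT : x ∉ ((fun k => f^[k] η) '' Set.Iio m) := by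
        rintro ⟨k, hk, hkx⟩
        exact hnot k (Set.mem_Iio.mp hk) hkx.symm
      obtain ⟨ε, hε, hball⟩ := Metric.mem_nhds_iff.mp (hTcl.isOpen_compl.mem_nhds hxT)
      have hfreq : ∃ᶠ n in atTop, dist (a n) x < ε/2 := by
        have := mapClusterPt_iff_frequently.mp hx (Metric.ball x (ε/2))
          (Metric.ball_mem_nhds _ (by linarith))
        simpa [Metric.mem_ball] using this
      obtain ⟨n, hn1, hn2⟩ := (hfreq.and_eventually (hnearT (ε/2) (by linarith))).exists
      obtain ⟨k, hk, hkd⟩ := hn2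
      have hd : dist (f^[k] η) x < ε := by
        calc dist (f^[k] η) x ≤ dist (f^[k] η) (a n) + dist (a n) x := dist_triangle _ _ _
          _ < ε/2 + ε/2 := by rw [dist_comm (f^[k] η) (a n)]; exact add_lt_add hkd hn1
          _ = ε := by ring
      have hmem : f^[k] η ∈ ((fun k => f^[k] η) '' Set.Iio m)ᶜ := by
        apply hball
        simpa [Metric.mem_ball, dist_comm] using hd
      exact hmem ⟨k, Set.mem_Iio.mpr hk, rfl⟩
    · rintro ⟨k, hk, rfl⟩
      exact hsub k hk
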